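/- Fix γ > 0, ω ∈ ℝ and λ > 0, and let 0 < r < γ·e^{−ωλ} with r < γ. Define D(ω, r, λ) := (1/λ²)·(sinh(ωλ) + e^{−ωλ}·(1 − γ/r)·(1 − e^{ωλ} − (γ/r)·log((e^{ωλ}·r − γ)/(r − γ)))), with log the real logarithm (the argument of the logarithm is positive on this range). Then the series Σ_{m=1}^∞ (r/γ)^m·(e^{(m+1)ωλ}/(m+2) − e^{mωλ}/(m+1) + e^{−ωλ}/((m+1)(m+2))) converges and its sum equals −λ²·D(ω, r, λ). -/

import Mathlib

/-- The time part `D(ω,r)` of the noncommutative black-hole wave operator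
acting on a Fourier mode `e^{iωt}` (Proposition 5.3 of the paper), with
deformation parameter `lam` (the Planck time). -/
noncomputable def Dfun (γ ω r lam : ℝ) : ℝ :=
  (1 / lam ^ 2) *
    (Real.sinh (ω * lam) +
      Real.exp (-(ω * lam)) * (1 - γ / r) *
        (1 - Real.exp (ω * lam) -
          (γ / r) * Real.log ((Real.exp (ω * lam) * r - γ) / (r - γ))))

/- The black-hole-interior series expansion from the proof of Proposition 5.3:
for 0 < r < γ·e^{−ωλ} with r < γ,
Σ_{m≥1} (r/γ)^m·(e^{(m+1)ωλ}/(m+2) − e^{mωλ}/(m+1) + e^{−ωλ}/((m+1)(m+2)))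
converges with sum −λ²·D(ω,r,λ). -/

theorem Dfun_interior_series (γ ω lam r : ℝ) (hγ : 0 < γ) (hlam : 0 < lam)
    (hr0 : 0 < r) (hr1 : r < γ * Real.exp (-(ω * lam))) (hr2 : r < γ) :
    HasSum
      (fun m : ℕ =>
        (r / γ) ^ (m + 1) *
          (Real.exp (((m : ℝ) + 2) * (ω * lam)) / ((m : ℝ) + 3)
            - Real.exp (((m : ℝ) + 1) * (ω * lam)) / ((m : ℝ) + 2)
            + Real.exp (-(ω * lam)) / (((m : ℝ) + 2) * ((m : ℝ) + 3))))
      (-(lam ^ 2) * Dfun γ ω r lam) := by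
  set a : ℝ := ω * lam with ha
  set E : ℝ := Real.exp a with hE
  have hEpos : 0 < E := Real.exp_pos a
  set x : ℝ := r / γ with hx
  have hx0 : 0 < x := div_pos hr0 hγ
  have hx1 : x < 1 := (div_lt_one hγ).mpr hr2
  set y : ℝ := x * E with hy
  have hy0 : 0 < y := mul_pos hx0 hEpos
  have hy1 : y < 1 := by
    have h1 : r * E < γ := by
      have := (mul_lt_mul_iff_of_pos_right hEpos).mpr hr1
      rwa [mul_assoc, ← Real.exp_add, neg_add_cancel, Real.exp_zero, mul_one] at this
    rw [hy, hx, div_mul_eq_mul_div, div_lt_one hγ]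
    exact h1
  have hxne : x ≠ 0 := ne_of_gt hx0
  have hEne : E ≠ 0 := ne_of_gt hEpos
  have h1xne : (1 : ℝ) - x ≠ 0 := by linarith
  have h1yne : (1 : ℝ) - y ≠ 0 := by linarith
  have hlamne : lam ≠ 0 := ne_of_gt hlam
  have hγne : γ ≠ 0 := ne_of_gt hγ
  have hrne : r ≠ 0 := ne_of_gt hr0
  set L : ℝ := -Real.log (1 - y) with hL
  set M : ℝ := -Real.log (1 - x) with hM
  have hsy : HasSum (fun n : ℕ => y ^ (n + 1) / (n + 1)) L :=
    Real.hasSum_pow_div_log_of_abs_lt_one (by rw [abs_of_pos hy0]; exact hy1)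
  have hsx : HasSum (fun n : ℕ => x ^ (n + 1) / (n + 1)) M :=
    Real.hasSum_pow_div_log_of_abs_lt_one (by rw [abs_of_pos hx0]; exact hx1)
  -- shifted sums
  have hA : HasSum (fun m : ℕ => y ^ (m + 3) / ((m : ℝ) + 3))
      (L - (y + y ^ 2 / 2)) := by
    have := (hasSum_nat_add_iff' (f := fun n : ℕ => y ^ (n + 1) / (n + 1)) 2
      (g := L)).mpr hsy
    simp only [Finset.sum_range_succ, Finset.sum_range_zero] at this
    convert this using 2 with m
    · rfl
    · push_cast; ring_nf
    · norm_num
  have hB : HasSum (fun m : ℕ => y ^ (m + 2) / ((m : ℝ) + 2)) (L - y) := by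
    have := (hasSum_nat_add_iff' (f := fun n : ℕ => y ^ (n + 1) / (n + 1)) 1
      (g := L)).mpr hsy
    simp only [Finset.sum_range_succ, Finset.sum_range_zero] at this
    convert this using 2 with m
    · rfl
    · push_cast; ring_nf
    · norm_num
  have hC1 : HasSum (fun m : ℕ => x ^ (m + 2) / ((m : ℝ) + 2)) (M - x) := by
    have := (hasSum_nat_add_iff' (f := fun n : ℕ => x ^ (n + 1) / (n + 1)) 1
      (g := M)).mpr hsx
    simp only [Finset.sum_range_succ, Finset.sum_range_zero] at this
    convert this using 2 with m
    · rfl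
    · push_cast; ring_nf
    · norm_num
  have hC2 : HasSum (fun m : ℕ => x ^ (m + 3) / ((m : ℝ) + 3))
      (M - (x + x ^ 2 / 2)) := by
    have := (hasSum_nat_add_iff' (f := fun n : ℕ => x ^ (n + 1) / (n + 1)) 2
      (g := M)).mpr hsx
    simp only [Finset.sum_range_succ, Finset.sum_range_zero] at this
    convert this using 2 with m
    · rfl
    · push_cast; ring_nf
    · norm_num
  have htot :
      HasSum (fun m : ℕ =>
        (1 / (x ^ 2 * E)) * (y ^ (m + 3) / ((m : ℝ) + 3))
          - (1 / (x * E)) * (y ^ (m + 2) / ((m : ℝ) + 2))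
          + ((1 / (E * x)) * (x ^ (m + 2) / ((m : ℝ) + 2))
            - (1 / (E * x ^ 2)) * (x ^ (m + 3) / ((m : ℝ) + 3))))
      ((1 / (x ^ 2 * E)) * (L - (y + y ^ 2 / 2))
        - (1 / (x * E)) * (L - y)
        + ((1 / (E * x)) * (M - x) - (1 / (E * x ^ 2)) * (M - (x + x ^ 2 / 2)))) :=
    ((hA.mul_left _).sub (hB.mul_left _)).add
      ((hC1.mul_left _).sub (hC2.mul_left _))
  -- rewrite exponentials
  have hexp : ∀ (k : ℕ), Real.exp ((k : ℝ) * a) = E ^ k := fun k => by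
    rw [hE, ← Real.exp_nat_mul]
  have hexpneg : Real.exp (-a) = E⁻¹ := by rw [hE, ← Real.exp_neg]
  have hrE : r * E < γ := by
    have := (mul_lt_mul_iff_of_pos_right hEpos).mpr hr1
    rwa [mul_assoc, ← Real.exp_add, neg_add_cancel, Real.exp_zero, mul_one] at this
  convert htot using 1
  · funext m
    have e1 : Real.exp (((m : ℝ) + 2) * a) = E ^ (m + 2) := by
      have h : ((m : ℝ) + 2) = ((m + 2 : ℕ) : ℝ) := by push_cast; ring
      rw [h, hexp]
    have e2 : Real.exp (((m : ℝ) + 1) * a) = E ^ (m + 1) := by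
      have h : ((m : ℝ) + 1) = ((m + 1 : ℕ) : ℝ) := by push_cast; ring
      rw [h, hexp]
    have hm2 : ((m : ℝ) + 2) ≠ 0 := by positivity
    have hm3 : ((m : ℝ) + 3) ≠ 0 := by positivity
    rw [e1, e2, hexpneg, hy, mul_pow, mul_pow]
    field_simp
    ring
  · -- sum equality
    have h1y' : (1 : ℝ) - y = (γ - r * E) / γ := by
      rw [hy, hx]; field_simp
    have h1x' : (1 : ℝ) - x = (γ - r) / γ := by
      rw [hx]; field_simp
    have hgr : γ - r ≠ 0 := by linarith
    have hgrE : γ - r * E ≠ 0 := by linarith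
    have hlogarg : (E * r - γ) / (r - γ) = (1 - y) / (1 - x) := by
      rw [h1y', h1x', div_div_div_cancel_right₀ hγne,
        div_eq_div_iff (by intro h; exact hgr (by linarith)) hgr]
      ring
    unfold Dfun
    rw [Real.sinh_eq, ← ha, ← hE, hexpneg, hlogarg, Real.log_div h1yne h1xne]
    have hγr : γ / r = x⁻¹ := by rw [hx]; field_simp
    rw [hγr]
    have hL' : Real.log (1 - y) = -L := by rw [hL]; ring
    have hM' : Real.log (1 - x) = -M := by rw [hM]; ring
    rw [hL', hM']
    field_simp
    ring
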